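/- Assume that 3b ∉ Δ, or that 3b ∈ Δ and φ(3b) ≠ 0. Then every 2-cocycle on CL(b,φ) is a coboundary; that is, there exists a function Φ : Δ → ℂ with α_λ(x_α, x_β) = (λ(α+β+2b) + B(α,β)) Φ(α+β) for all α, β ∈ Δ. (Equivalently, CL(b,φ) has no non-trivial central extension by a one-dimensional center.) -/

import Mathlib

open Polynomial


/-- `B(α,β) = (1/b)(φ(α)β − φ(β)α + b(φ(α) − φ(β)))`. -/
noncomputable def Bc (b : ℂ) {Δ : AddSubgroup ℂ} (φ : Δ →+ ℂ) (α β : Δ) : ℂ :=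
  (1 / b) * (φ α * (β : ℂ) - φ β * (α : ℂ) + b * (φ α - φ β))

/-- A 2-cocycle on the Lie conformal algebra `CL(b,φ)`, recorded through its values
`F α β = α_λ(x_α, x_β) ∈ ℂ[λ]` on the free `ℂ[∂]`-generators.  (By conformal
sesquilinearity `α_λ(∂a,b) = −λα_λ(a,b) = −α_λ(a,∂b)`, a 2-cocycle is determined by
these values, skew-symmetry becomes `α_λ(x_α,x_β) = −α_{−λ}(x_β,x_α)`, and the cocycle
identity `α_λ(a,[b_μ c]) − α_μ(b,[a_λ c]) = α_{λ+μ}([a_λ b],c)` evaluated on generators,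
using `[x_α λ x_β] = ((α+b)∂ + (α+β+2b)λ + B(α,β))x_{α+β}`, becomes the displayed
polynomial identity, stated here by evaluation at all complex points `l, m`.) -/
def IsCocycle (Δ : AddSubgroup ℂ) (b : ℂ) (φ : Δ →+ ℂ)
    (F : Δ → Δ → Polynomial ℂ) : Prop :=
  (∀ α β : Δ, ∀ l : ℂ, (F α β).eval l = -((F β α).eval (-l))) ∧
  (∀ α β γ : Δ, ∀ l m : ℂ,
    (((β : ℂ) + b) * l + ((β : ℂ) + (γ : ℂ) + 2 * b) * m + Bc b φ β γ)
        * (F α (β + γ)).eval l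
      - (((α : ℂ) + b) * m + ((α : ℂ) + (γ : ℂ) + 2 * b) * l + Bc b φ α γ)
        * (F β (α + γ)).eval m
    = (-(((α : ℂ) + b)) * (l + m) + ((α : ℂ) + (β : ℂ) + 2 * b) * l + Bc b φ α β)
        * (F (α + β) γ).eval (l + m))

lemma Bc_zero_left (b : ℂ) (hb0 : b ≠ 0) {Δ : AddSubgroup ℂ} (φ : Δ →+ ℂ) (γ : Δ) :
    Bc b φ 0 γ = - φ γ := by
  rw [Bc]
  simp only [map_zero, ZeroMemClass.coe_zero, zero_mul, mul_zero, zero_sub, sub_zero]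
  field_simp
  ring

lemma core (Δ : AddSubgroup ℂ) (b : ℂ) (hb0 : b ≠ 0) (φ : Δ →+ ℂ)
    (F : Δ → Δ → Polynomial ℂ) (hF : IsCocycle Δ b φ F) (β γ : Δ)
    (hd : (β : ℂ) + (γ : ℂ) + 2 * b ≠ 0)
    (hδ0 : φ (β + γ) = 0) (t : ℂ) (hbt : b * t = φ γ) :
    (F 0 (β + γ)).coeff 0 = 0 ∧
    C (((β : ℂ) + (γ : ℂ) + 2 * b) * (F 0 (β + γ)).coeff 1) * X
      = C ((β : ℂ) + (γ : ℂ) + 3 * b) * ((F β γ).comp (X + C t))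
        - C b * (X * derivative ((F β γ).comp (X + C t))) ∧
    (C (((β : ℂ) + b) * (F 0 (β + γ)).coeff 1)
        + C (((β : ℂ) + (γ : ℂ) + 2 * b) * (F 0 (β + γ)).coeff 2) * X
      = C ((β : ℂ) + b) * derivative ((F β γ).comp (X + C t))
        - C b * (X * hasseDeriv 2 ((F β γ).comp (X + C t)))) ∧
    (C (((β : ℂ) + b) * (F 0 (β + γ)).coeff 2)
        + C (((β : ℂ) + (γ : ℂ) + 2 * b) * (F 0 (β + γ)).coeff 3) * X
      = C ((β : ℂ) + b) * hasseDeriv 2 ((F β γ).comp (X + C t))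
        - C b * (X * hasseDeriv 3 ((F β γ).comp (X + C t)))) := by
  have hφβ : φ β = - φ γ := by
    have h := (map_add φ β γ).symm.trans hδ0
    linear_combination h
  have hB1 : Bc b φ β γ = -t * ((β : ℂ) + (γ : ℂ) + 2 * b) := by
    rw [Bc, hφβ, ← hbt]
    field_simp
    ring
  have hB2 : Bc b φ 0 γ = -(b * t) := by rw [Bc_zero_left b hb0 φ γ, hbt]
  have hB3 : Bc b φ 0 β = b * t := by
    rw [Bc_zero_left b hb0 φ β, hφβ, ← hbt]; ring
  set v := (F β γ).comp (X + C t) with hv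
  set g := F 0 (β + γ) with hg
  have hID : ∀ l s : ℂ, (((β : ℂ) + b) * l + ((β : ℂ) + (γ : ℂ) + 2 * b) * s) * g.eval l
      = (b * s + ((γ : ℂ) + 2 * b) * l) * v.eval s
        + ((((β : ℂ) + b)) * l - b * s) * v.eval (l + s) := by
    intro l s
    have h := hF.2 0 β γ l (s + t)
    rw [zero_add, zero_add] at h
    rw [hB1, hB2, hB3] at h
    simp only [ZeroMemClass.coe_zero] at h
    have e1 : v.eval s = (F β γ).eval (s + t) := by rw [hv]; simp [eval_comp]
    have e2 : v.eval (l + s) = (F β γ).eval (l + (s + t)) := by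
      rw [hv]; simp [eval_comp]; ring_nf
    rw [e1, e2]
    linear_combination h
  have hLR : ∀ s : ℂ,
      C ((β : ℂ) + b) * (X * g) + C (((β : ℂ) + (γ : ℂ) + 2 * b) * s) * g
      = (C (b * s) + C ((γ : ℂ) + 2 * b) * X) * C (v.eval s)
        + (C ((β : ℂ) + b) * (X * taylor s v) - C (b * s) * taylor s v) := by
    intro s
    apply Polynomial.funext
    intro l
    have h := hID l s
    have e3 : (taylor s v).eval l = v.eval (l + s) := by
      rw [taylor_apply]; simp [eval_comp]
    simp only [eval_add, eval_sub, eval_mul, eval_C, eval_X, e3]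
    linear_combination h
  have hg0 : g.coeff 0 = 0 := by
    have h := congrArg (fun p => p.coeff 0) (hLR 1)
    simp only [coeff_add, coeff_sub, coeff_C_mul, mul_coeff_zero, coeff_X_zero,
      taylor_coeff_zero, coeff_C, mul_one, zero_mul, mul_zero, if_pos rfl, if_true,
      eq_self_iff_true] at h
    have h1 : ((β : ℂ) + (γ : ℂ) + 2 * b) * g.coeff 0 = 0 := by linear_combination h
    exact (mul_eq_zero.mp h1).resolve_left hd
  have hE0 : ∀ s : ℂ, ((β : ℂ) + (γ : ℂ) + 2 * b) * g.coeff 1 * s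
      = ((β : ℂ) + (γ : ℂ) + 3 * b) * v.eval s - b * (s * (derivative v).eval s) := by
    intro s
    have h := congrArg (fun p => p.coeff 1) (hLR s)
    simp only [coeff_add, coeff_sub, coeff_C_mul, coeff_X_mul, coeff_C, taylor_coeff_zero,
      taylor_coeff_one, coeff_one, mul_coeff_zero, coeff_mul_C, coeff_X_one, hg0] at h
    norm_num at h
    linear_combination h
  have hP0 : C (((β : ℂ) + (γ : ℂ) + 2 * b) * g.coeff 1) * X
      = C ((β : ℂ) + (γ : ℂ) + 3 * b) * v - C b * (X * derivative v) := by
    apply Polynomial.funext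
    intro s
    simp only [eval_add, eval_sub, eval_mul, eval_C, eval_X]
    linear_combination hE0 s
  have hE1 : ∀ s : ℂ, ((β : ℂ) + b) * g.coeff 1 + ((β : ℂ) + (γ : ℂ) + 2 * b) * g.coeff 2 * s
      = ((β : ℂ) + b) * (derivative v).eval s - b * (s * (hasseDeriv 2 v).eval s) := by
    intro s
    have h := congrArg (fun p => p.coeff 2) (hLR s)
    simp only [coeff_add, coeff_sub, coeff_C_mul, coeff_X_mul, coeff_C, taylor_coeff,
      coeff_mul_C, coeff_X_one, coeff_X] at h
    norm_num at h
    linear_combination h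
  have hP1 : C (((β : ℂ) + b) * g.coeff 1)
        + C (((β : ℂ) + (γ : ℂ) + 2 * b) * g.coeff 2) * X
      = C ((β : ℂ) + b) * derivative v - C b * (X * hasseDeriv 2 v) := by
    apply Polynomial.funext
    intro s
    simp only [eval_add, eval_sub, eval_mul, eval_C, eval_X]
    linear_combination hE1 s
  have hE2 : ∀ s : ℂ, ((β : ℂ) + b) * g.coeff 2 + ((β : ℂ) + (γ : ℂ) + 2 * b) * g.coeff 3 * s
      = ((β : ℂ) + b) * (hasseDeriv 2 v).eval s - b * (s * (hasseDeriv 3 v).eval s) := by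
    intro s
    have h := congrArg (fun p => p.coeff 3) (hLR s)
    simp only [coeff_add, coeff_sub, coeff_C_mul, coeff_X_mul, coeff_C, taylor_coeff,
      coeff_mul_C, coeff_X_one, coeff_X] at h
    norm_num at h
    linear_combination h
  have hP2 : C (((β : ℂ) + b) * g.coeff 2)
        + C (((β : ℂ) + (γ : ℂ) + 2 * b) * g.coeff 3) * X
      = C ((β : ℂ) + b) * hasseDeriv 2 v - C b * (X * hasseDeriv 3 v) := by
    apply Polynomial.funext
    intro s
    simp only [eval_add, eval_sub, eval_mul, eval_C, eval_X]
    linear_combination hE2 s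
  exact ⟨hg0, hP0, hP1, hP2⟩

lemma extract0 (c e bb : ℂ) (v : Polynomial ℂ)
    (h : C c * X = C e * v - C bb * (X * derivative v)) :
    e * v.coeff 0 = 0 ∧ c = e * v.coeff 1 - bb * v.coeff 1 := by
  constructor
  · have h0 := congrArg (fun p => p.coeff 0) h
    simp only [coeff_C_mul, coeff_sub, coeff_X_zero, mul_zero, mul_coeff_zero, coeff_add,
      coeff_C_zero] at h0
    linear_combination -h0
  · have h1 := congrArg (fun p => p.coeff 1) h
    simp only [coeff_C_mul, coeff_sub, coeff_X_one, mul_one, coeff_X_mul, coeff_derivative] at h1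
    norm_num at h1
    linear_combination h1

lemma extractP (a0 a1 w bb : ℂ) (k : ℕ) (v : Polynomial ℂ)
    (h : C a0 + C a1 * X = C w * hasseDeriv k v - C bb * (X * hasseDeriv (k+1) v)) :
    a0 = w * v.coeff k ∧
    a1 = w * (((1+k).choose k : ℕ) : ℂ) * v.coeff (1+k) - bb * v.coeff (k+1) ∧
    ∀ n : ℕ, 0 = w * (((n+2+k).choose k : ℕ) : ℂ) * v.coeff (n+2+k)
        - bb * (((n+1+(k+1)).choose (k+1) : ℕ) : ℂ) * v.coeff (n+1+(k+1)) := by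
  refine ⟨?_, ?_, ?_⟩
  · have h0 := congrArg (fun p => p.coeff 0) h
    simp only [coeff_add, coeff_sub, coeff_C_mul, coeff_C_zero, mul_coeff_zero, coeff_X_zero,
      mul_zero, hasseDeriv_coeff, zero_add, coeff_C] at h0
    norm_num at h0
    linear_combination h0
  · have h1 := congrArg (fun p => p.coeff 1) h
    simp only [coeff_add, coeff_sub, coeff_C_mul, coeff_C, coeff_X_mul, coeff_X_one, mul_one,
      hasseDeriv_coeff, zero_add] at h1
    norm_num at h1
    linear_combination h1
  · intro n
    have h2 := congrArg (fun p => p.coeff (n+2)) h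
    simp only [coeff_add, coeff_sub, coeff_C_mul, coeff_C, coeff_X_mul, coeff_X,
      hasseDeriv_coeff] at h2
    norm_num at h2
    linear_combination h2

lemma Bc_of_sum_zero (b : ℂ) (hb0 : b ≠ 0) {Δ : AddSubgroup ℂ} (φ : Δ →+ ℂ) (β γ : Δ)
    (hδ0 : φ (β + γ) = 0) :
    Bc b φ β γ = -(φ γ / b) * ((β : ℂ) + (γ : ℂ) + 2 * b) := by
  have hφβ : φ β = - φ γ := by linear_combination (map_add φ β γ).symm.trans hδ0
  rw [Bc, hφβ]
  field_simp
  ring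

/-- If `3b ∉ Δ`, or `3b ∈ Δ` and `φ(3b) ≠ 0`, then every 2-cocycle on
`CL(b,φ)` is a coboundary: there is `Φ : Δ → ℂ` with
`α_λ(x_α,x_β) = (λ(α+β+2b) + B(α,β))Φ(α+β)` for all `α, β ∈ Δ`. -/
theorem stmt3 (Δ : AddSubgroup ℂ) (hΔinf : (Δ : Set ℂ).Infinite)
    (b : ℂ) (hb : 2 * b ∉ Δ) (φ : Δ →+ ℂ)
    (h3b : (3 * b ∉ Δ) ∨ (∃ h : 3 * b ∈ Δ, φ ⟨3 * b, h⟩ ≠ 0))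
    (F : Δ → Δ → Polynomial ℂ) (hF : IsCocycle Δ b φ F) :
    ∃ Φ : Δ → ℂ, ∀ α β : Δ, ∀ l : ℂ,
      (F α β).eval l
        = (l * ((α : ℂ) + (β : ℂ) + 2 * b) + Bc b φ α β) * Φ (α + β) := by
  classical
  have hb0 : b ≠ 0 := by
    intro h
    exact hb (by rw [h, mul_zero]; exact Δ.zero_mem)
  have hdd : ∀ δ : Δ, (δ : ℂ) + 2 * b ≠ 0 := by
    intro δ h
    apply hb
    have h2 : (2 * b : ℂ) = -(δ : ℂ) := by linear_combination h
    rw [h2]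
    exact Δ.neg_mem δ.2
  have h3n : ∀ δ : Δ, φ δ = 0 → (δ : ℂ) + 3 * b ≠ 0 := by
    intro δ hφδ h
    have h2 : (3 * b : ℂ) = -(δ : ℂ) := by linear_combination h
    have hm : (3 * b : ℂ) ∈ Δ := by rw [h2]; exact Δ.neg_mem δ.2
    rcases h3b with h1 | ⟨hmem, hφ3⟩
    · exact h1 hm
    · apply hφ3
      have he : (⟨3 * b, hmem⟩ : Δ) = -δ := by
        apply Subtype.ext
        simpa using h2
      rw [he, map_neg, hφδ, neg_zero]
  refine ⟨fun δ => if φ δ = 0 then (F 0 δ).coeff 1 / ((δ : ℂ) + 2 * b)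
      else -((F 0 δ).eval 0) / φ δ, ?_⟩
  intro β γ l
  have hco : ((β + γ : Δ) : ℂ) = (β : ℂ) + (γ : ℂ) := rfl
  by_cases hδ : φ (β + γ) = 0
  · -- main branch
    simp only [if_pos hδ, hco]
    have hd2 : (β : ℂ) + (γ : ℂ) + 2 * b ≠ 0 := by
      have := hdd (β + γ); rwa [hco] at this
    have hδ3 : (β : ℂ) + (γ : ℂ) + 3 * b ≠ 0 := by
      have := h3n (β + γ) hδ; rwa [hco] at this
    obtain ⟨hg0, hP0, hP1, hP2⟩ := core Δ b hb0 φ F hF β γ hd2 hδ (φ γ / b) (by field_simp)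
    set v := (F β γ).comp (X + C (φ γ / b)) with hv
    set g := F 0 (β + γ) with hgdef
    obtain ⟨he00, he01⟩ := extract0 _ _ _ _ hP0
    have hv0 : v.coeff 0 = 0 := by
      rcases mul_eq_zero.mp he00 with h | h
      · exact absurd h hδ3
      · exact h
    have hv1 : v.coeff 1 = g.coeff 1 := by
      have h1 : ((β : ℂ) + (γ : ℂ) + 2 * b) * (v.coeff 1 - g.coeff 1) = 0 := by
        linear_combination -he01
      rcases mul_eq_zero.mp h1 with h | h
      · exact absurd h hd2
      · linear_combination h
    have hP1h : C (((β : ℂ) + b) * g.coeff 1)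
        + C (((β : ℂ) + (γ : ℂ) + 2 * b) * g.coeff 2) * X
        = C ((β : ℂ) + b) * hasseDeriv 1 v - C b * (X * hasseDeriv (1 + 1) v) := by
      rw [hasseDeriv_one']
      exact hP1
    obtain ⟨hq10, hq11, hq12⟩ := extractP _ _ _ _ 1 v hP1h
    obtain ⟨hq20, hq21, hq22⟩ := extractP _ _ _ _ 2 v hP2
    norm_num at hq11 hq21
    -- choose a good auxiliary decomposition point
    obtain ⟨x, hxmem, hxne⟩ : ∃ x, x ∈ Δ ∧
        x ∉ ({0, -b, ((β : ℂ) + (γ : ℂ) + b) / 2} : Set ℂ) := by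
      obtain ⟨x, hx⟩ := (hΔinf.diff (((Set.finite_singleton _).insert _).insert _)).nonempty
      exact ⟨x, hx.1, hx.2⟩
    simp only [Set.mem_insert_iff, Set.mem_singleton_iff, not_or] at hxne
    obtain ⟨hx0, hxb, hxh⟩ := hxne
    set β' : Δ := ⟨x, hxmem⟩ with hβ'
    set γ' : Δ := β + γ - β' with hγ'
    have hsum : β' + γ' = β + γ := by rw [hγ']; abel
    have hδ' : φ (β' + γ') = 0 := by rw [hsum]; exact hδ
    have hsc : (β' : ℂ) + (γ' : ℂ) = (β : ℂ) + (γ : ℂ) := by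
      rw [← hco, ← hsum]; rfl
    have hd2' : (β' : ℂ) + (γ' : ℂ) + 2 * b ≠ 0 := by rw [hsc]; exact hd2
    obtain ⟨hg0', hP0', hP1', hP2'⟩ :=
      core Δ b hb0 φ F hF β' γ' hd2' hδ' (φ γ' / b) (by field_simp)
    rw [hsum] at hP1' hP2'
    rw [hsc] at hP1' hP2'
    rw [← hgdef] at hP1' hP2'
    set v' := (F β' γ').comp (X + C (φ γ' / b)) with hv'
    have hP1h' : C (((β' : ℂ) + b) * g.coeff 1)
        + C (((β : ℂ) + (γ : ℂ) + 2 * b) * g.coeff 2) * X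
        = C ((β' : ℂ) + b) * hasseDeriv 1 v' - C b * (X * hasseDeriv (1 + 1) v') := by
      rw [hasseDeriv_one']
      exact hP1'
    obtain ⟨hq10', hq11', hq12'⟩ := extractP _ _ _ _ 1 v' hP1h'
    obtain ⟨hq20', hq21', hq22'⟩ := extractP _ _ _ _ 2 v' hP2'
    norm_num at hq11' hq21'
    have hx0' : (β' : ℂ) ≠ 0 := hx0
    have hxb' : (β' : ℂ) ≠ -b := hxb
    have hxh' : (β' : ℂ) ≠ ((β : ℂ) + (γ : ℂ) + b) / 2 := hxh
    -- g3 = 0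
    have hg3 : g.coeff 3 = 0 := by
      have h1 := hq12' 0
      norm_num at h1
      have h2 : (β' : ℂ) * v'.coeff 3 = 0 := by
        linear_combination (-1/3 : ℂ) * h1
      have hv3' : v'.coeff 3 = 0 := by
        rcases mul_eq_zero.mp h2 with h | h
        · exact absurd h hx0'
        · exact h
      rw [hv3'] at hq21'
      have h3 : ((β : ℂ) + (γ : ℂ) + 2 * b) * g.coeff 3 = 0 := by linear_combination hq21'
      rcases mul_eq_zero.mp h3 with h | h
      · exact absurd h hd2
      · exact h
    -- g2 = 0
    have hg2 : g.coeff 2 = 0 := by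
      have hxbne : (β' : ℂ) + b ≠ 0 := by
        intro h
        exact hxb' (by linear_combination h)
      have hg2v : g.coeff 2 = v'.coeff 2 := mul_left_cancel₀ hxbne hq20'
      have h1 : (((β : ℂ) + (γ : ℂ) + b) - 2 * (β' : ℂ)) * g.coeff 2 = 0 := by
        linear_combination hq11' - (2 * (β' : ℂ) + b) * hg2v
      rcases mul_eq_zero.mp h1 with h | h
      · exfalso
        apply hxh'
        field_simp
        linear_combination -h
      · exact h
    -- v.coeff 3 = 0
    have hv3 : v.coeff 3 = 0 := by
      have h1 := hq12 0
      norm_num at h1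
      rw [hg3] at hq21
      have h2 : (2 * b) * v.coeff 3 = 0 := by linear_combination h1 - hq21
      rcases mul_eq_zero.mp h2 with h | h
      · exact absurd h (mul_ne_zero two_ne_zero hb0)
      · exact h
    -- v.coeff 2 = 0
    have hv2 : v.coeff 2 = 0 := by
      rw [hg2] at hq11 hq20
      have h2 : b * v.coeff 2 = 0 := by linear_combination hq11 - 2 * hq20
      exact (mul_eq_zero.mp h2).resolve_left hb0
    -- v.coeff (n+4) = 0
    have hv4 : ∀ n : ℕ, v.coeff (n + 4) = 0 := by
      intro n
      by_contra hV
      have hA : (0 : ℂ) = ((β : ℂ) + b) * (((n + 4).choose 1 : ℕ) : ℂ) * v.coeff (n + 4)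
          - b * (((n + 4).choose 2 : ℕ) : ℂ) * v.coeff (n + 4) := by
        have := hq12 (n + 1)
        simpa [show n + 1 + 2 + 1 = n + 4 by omega, show n + 1 + 1 + (1 + 1) = n + 4 by omega,
          show 1 + 1 = 2 by omega] using this
      have hB : (0 : ℂ) = ((β : ℂ) + b) * (((n + 4).choose 2 : ℕ) : ℂ) * v.coeff (n + 4)
          - b * (((n + 4).choose 3 : ℕ) : ℂ) * v.coeff (n + 4) := by
        have := hq22 n
        simpa [show n + 2 + 2 = n + 4 by omega, show n + 1 + (2 + 1) = n + 4 by omega,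
          show 2 + 1 = 3 by omega] using this
      have c1 : ((n + 4).choose 1) = n + 4 := Nat.choose_one_right _
      have c2 : ((n + 4).choose 2) * 2 = (n + 4) * (n + 3) := by
        have h := Nat.choose_succ_right_eq (n + 4) 1
        rw [Nat.choose_one_right] at h
        simpa using h
      have c3 : ((n + 4).choose 3) * 3 = ((n + 4).choose 2) * (n + 2) := by
        have h := Nat.choose_succ_right_eq (n + 4) 2
        simpa using h
      have cc1 : (((n + 4).choose 1 : ℕ) : ℂ) = (n : ℂ) + 4 := by
        rw [c1]; push_cast; ring
      have cc2 : (((n + 4).choose 2 : ℕ) : ℂ) * 2 = ((n : ℂ) + 4) * ((n : ℂ) + 3) := by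
        exact_mod_cast congrArg (fun m : ℕ => (m : ℂ)) c2
      have cc3 : (((n + 4).choose 3 : ℕ) : ℂ) * 3
          = (((n + 4).choose 2 : ℕ) : ℂ) * ((n : ℂ) + 2) := by
        exact_mod_cast congrArg (fun m : ℕ => (m : ℂ)) c3
      have hwA : ((β : ℂ) + b) * ((n : ℂ) + 4) = b * (((n + 4).choose 2 : ℕ) : ℂ) := by
        apply mul_right_cancel₀ hV
        linear_combination -hA - ((β : ℂ) + b) * v.coeff (n + 4) * cc1
      have hwB : ((β : ℂ) + b) * (((n + 4).choose 2 : ℕ) : ℂ)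
          = b * (((n + 4).choose 3 : ℕ) : ℂ) := by
        apply mul_right_cancel₀ hV
        linear_combination -hB
      have hC : (((n + 4).choose 2 : ℕ) : ℂ) ^ 2
          = ((n : ℂ) + 4) * (((n + 4).choose 3 : ℕ) : ℂ) := by
        apply mul_left_cancel₀ hb0
        linear_combination ((n : ℂ) + 4) * hwB - (((n + 4).choose 2 : ℕ) : ℂ) * hwA
      have key : ((n : ℂ) + 4) ^ 2 * ((n : ℂ) + 3) * ((n : ℂ) + 5) = 0 := by
        linear_combination 12 * hC
          + (2 * ((n : ℂ) + 4) * ((n : ℂ) + 2)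
              - 3 * (2 * (((n + 4).choose 2 : ℕ) : ℂ) + ((n : ℂ) + 4) * ((n : ℂ) + 3))) * cc2
          + 4 * ((n : ℂ) + 4) * cc3
      have hne : ∀ m : ℕ, ((m : ℂ)) + 1 ≠ 0 := by
        intro m h
        have : ((m + 1 : ℕ) : ℂ) = 0 := by push_cast; linear_combination h
        exact Nat.cast_ne_zero.mpr (Nat.succ_ne_zero m) this
      have h4 : ((n : ℂ) + 4) ≠ 0 := by
        have := hne (n + 3); push_cast at this
        intro h; exact this (by linear_combination h)
      have h3 : ((n : ℂ) + 3) ≠ 0 := by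
        have := hne (n + 2); push_cast at this
        intro h; exact this (by linear_combination h)
      have h5 : ((n : ℂ) + 5) ≠ 0 := by
        have := hne (n + 4); push_cast at this
        intro h; exact this (by linear_combination h)
      rcases mul_eq_zero.mp key with h | h
      · rcases mul_eq_zero.mp h with h' | h'
        · exact pow_ne_zero 2 h4 h'
        · exact h3 h'
      · exact h5 h
    -- v is linear with zero constant term
    have hvC : v = C (g.coeff 1) * X := by
      refine Polynomial.ext fun n => ?_
      have hc : (C (g.coeff 1) * X).coeff n = if n = 1 then g.coeff 1 else 0 := by
        simp [coeff_C_mul, coeff_X, eq_comm]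
      rw [hc]
      match n with
      | 0 => simpa using hv0
      | 1 => simpa using hv1
      | 2 => simpa using hv2
      | 3 => simpa using hv3
      | (m + 4) => simpa using hv4 m
    have hfeval : (F β γ).eval l = g.coeff 1 * (l - φ γ / b) := by
      have h1 : (F β γ).eval l = v.eval (l - φ γ / b) := by
        rw [hv, eval_comp]
        simp
      rw [h1, hvC]
      simp
    rw [hfeval, Bc_of_sum_zero b hb0 φ β γ hδ]
    linear_combination (-(g.coeff 1) * (l - φ γ / b)) * mul_inv_cancel₀ hd2
  · -- easy branch: φ (β+γ) ≠ 0
    simp only [if_neg hδ, hco]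
    have h := hF.2 0 β γ 0 l
    rw [zero_add, zero_add] at h
    rw [Bc_zero_left b hb0 φ γ, Bc_zero_left b hb0 φ β] at h
    simp only [ZeroMemClass.coe_zero, zero_add] at h
    have hadd : φ β + φ γ = φ (β + γ) := (map_add φ β γ).symm
    have hkey : φ (β + γ) * ((F β γ).eval l)
        = (l * ((β : ℂ) + (γ : ℂ) + 2 * b) + Bc b φ β γ) * (-(F 0 (β + γ)).eval 0) := by
      linear_combination h - (F β γ).eval l * hadd
    rw [← mul_div_assoc, eq_div_iff hδ]
    linear_combination hkey
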